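/- The top-k SVM loss admits the variational form: max over p in Ω(k) = {p ∈ ℝ^K : p ≥ 0, ∑_l p_l ≤ 1, p_l ≤ 1/k for all l} of ∑_l p_l a_l equals (1/k) · ∑_{i=1}^k max(0, a)_{[i]}, i.e., the average of the k largest entries of the vector (max(a_1, 0), …, max(a_K, 0)) — equivalently (1/k) times the sum of the k largest values of the coordinatewise-positive-part of a. -/
import Mathlib


/-- Variational form of the top-k SVM loss: the maximum of `⟨p, a⟩` over
`Ω(k) = {p : p ≥ 0, ∑ p_l ≤ 1, p_l ≤ 1/k}` equals `(1/k)` times the sum of the k largest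
entries of the coordinatewise positive part of `a` (expressed as a maximum over size-k
subsets). -/
theorem topk_svm_variational (K k : ℕ) (hk : 1 ≤ k) (hkK : k ≤ K) (a : Fin K → ℝ)
    (v : ℝ)
    (hv : v = (1 / (k : ℝ)) *
      ((Finset.univ.powersetCard k).sup'
        (by
          rw [Finset.powersetCard_nonempty]
          simpa using hkK)
        (fun S => ∑ i ∈ S, max (a i) 0))) :
    (∃ p : Fin K → ℝ, (∀ i, 0 ≤ p i) ∧ (∑ i : Fin K, p i ≤ 1) ∧ (∀ i, p i ≤ 1 / (k : ℝ)) ∧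
      ∑ i : Fin K, p i * a i = v) ∧
    (∀ p : Fin K → ℝ, (∀ i, 0 ≤ p i) → (∑ i : Fin K, p i ≤ 1) → (∀ i, p i ≤ 1 / (k : ℝ)) →
      ∑ i : Fin K, p i * a i ≤ v) := by
  have hkpos : (0:ℝ) < k := by exact_mod_cast hk
  set b : Fin K → ℝ := fun i => max (a i) 0 with hb
  have hne : (Finset.univ.powersetCard k : Finset (Finset (Fin K))).Nonempty := by
    rw [Finset.powersetCard_nonempty]; simpa using hkK
  obtain ⟨S, hSmem, hSval⟩ := Finset.exists_mem_eq_sup' hne (fun S => ∑ i ∈ S, b i)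
  have hScard : S.card = k := (Finset.mem_powersetCard.mp hSmem).2
  have hle : ∀ T : Finset (Fin K), T.card = k → ∑ i ∈ T, b i ≤ ∑ i ∈ S, b i := by
    intro T hT
    rw [← hSval]
    exact Finset.le_sup' (fun T => ∑ i ∈ T, b i)
      (Finset.mem_powersetCard.mpr ⟨Finset.subset_univ _, hT⟩)
  have hv' : v = (1/(k:ℝ)) * ∑ i ∈ S, b i := by rw [hv, ← hSval]
  have hbnn : ∀ i, 0 ≤ b i := fun i => le_max_right _ _
  have habs : ∀ i, a i ≤ b i := fun i => le_max_left _ _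
  constructor
  · -- existence
    classical
    set T := S.filter (fun i => 0 < a i) with hT
    have hTsum : ∑ i ∈ S, b i = ∑ i ∈ T, a i := by
      rw [hT, Finset.sum_filter]
      apply Finset.sum_congr rfl
      intro i _
      by_cases h : 0 < a i
      · simp [h, hb, max_eq_left h.le]
      · simp [h, hb, max_eq_right (not_lt.mp h)]
    refine ⟨fun i => if i ∈ T then 1/(k:ℝ) else 0, ?_, ?_, ?_, ?_⟩
    · intro i; dsimp only; split <;> positivity
    · rw [Finset.sum_ite_mem, Finset.univ_inter, Finset.sum_const, nsmul_eq_mul]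
      have hc : (T.card : ℝ) ≤ k := by
        exact_mod_cast hScard ▸ Finset.card_filter_le _ _
      calc (T.card : ℝ) * (1/k) ≤ k * (1/k) :=
            mul_le_mul_of_nonneg_right hc (by positivity)
        _ = 1 := by field_simp
    · intro i; dsimp only; split
      · exact le_refl _
      · positivity
    · simp only [ite_mul, zero_mul]
      rw [Finset.sum_ite_mem, Finset.univ_inter, hv', hTsum, Finset.mul_sum]
  · -- upper bound
    intro p hp0 hpsum hpk
    have hSne : S.Nonempty := Finset.card_pos.mp (by omega)
    obtain ⟨i0, hi0, hi0min⟩ := Finset.exists_mem_eq_inf' hSne b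
    set m := b i0 with hm
    have hmle : ∀ i ∈ S, m ≤ b i := by
      intro i hi; exact hi0min ▸ Finset.inf'_le b hi
    have hmnn : 0 ≤ m := hbnn i0
    have hout : ∀ j, j ∉ S → b j ≤ m := by
      intro j hj
      have hjne : j ∉ S.erase i0 := fun h => hj (Finset.mem_of_mem_erase h)
      have hcard : (insert j (S.erase i0)).card = k := by
        rw [Finset.card_insert_of_notMem hjne, Finset.card_erase_of_mem hi0, hScard]
        omega
      have := hle _ hcard
      rw [Finset.sum_insert hjne, Finset.sum_erase_eq_sub hi0] at this
      linarith
    -- key sums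
    have hsplit : ∑ i ∈ S, p i + ∑ i ∈ Sᶜ, p i = ∑ i : Fin K, p i :=
      Finset.sum_add_sum_compl S p
    have h1 : ∑ i ∈ S, p i * b i ≤
        (1/(k:ℝ)) * ((∑ i ∈ S, b i) - k * m) + m * ∑ i ∈ S, p i := by
      have : ∀ i ∈ S, p i * b i ≤ (1/(k:ℝ)) * (b i - m) + m * p i := by
        intro i hi
        have h1 : p i * b i = p i * (b i - m) + m * p i := by ring
        rw [h1]
        have := mul_le_mul_of_nonneg_right (hpk i) (sub_nonneg.mpr (hmle i hi))
        linarith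
      calc ∑ i ∈ S, p i * b i ≤ ∑ i ∈ S, ((1/(k:ℝ)) * (b i - m) + m * p i) :=
            Finset.sum_le_sum this
        _ = (1/(k:ℝ)) * ((∑ i ∈ S, b i) - k * m) + m * ∑ i ∈ S, p i := by
            rw [Finset.sum_add_distrib, ← Finset.mul_sum, ← Finset.mul_sum,
              Finset.sum_sub_distrib, Finset.sum_const, hScard, nsmul_eq_mul]
    have h2 : ∑ i ∈ Sᶜ, p i * b i ≤ m * ∑ i ∈ Sᶜ, p i := by
      rw [Finset.mul_sum]
      apply Finset.sum_le_sum
      intro i hi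
      have hiS : i ∉ S := Finset.mem_compl.mp hi
      calc p i * b i ≤ p i * m := mul_le_mul_of_nonneg_left (hout i hiS) (hp0 i)
        _ = m * p i := mul_comm _ _
    have h3 : ∑ i : Fin K, p i * a i ≤ ∑ i : Fin K, p i * b i :=
      Finset.sum_le_sum (fun i _ => mul_le_mul_of_nonneg_left (habs i) (hp0 i))
    have h4 : ∑ i ∈ S, p i * b i + ∑ i ∈ Sᶜ, p i * b i = ∑ i : Fin K, p i * b i :=
      Finset.sum_add_sum_compl S _
    have h5 : 0 ≤ ∑ i ∈ S, p i := Finset.sum_nonneg (fun i _ => hp0 i)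
    have h6 : ∑ i ∈ Sᶜ, p i ≤ 1 - ∑ i ∈ S, p i := by linarith
    have h7 : m * ∑ i ∈ Sᶜ, p i ≤ m * (1 - ∑ i ∈ S, p i) :=
      mul_le_mul_of_nonneg_left h6 hmnn
    rw [hv']
    have hkinv : (1/(k:ℝ)) * ((k:ℝ) * m) = m := by field_simp
    nlinarith [h1, h2, h3, h4, h7]
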